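/- Let $m = 2k+1$ with $k \geq 2$, and set $\ell = k$ if $k$ is even and $\ell = k - 1$ if $k$ is odd. Then in the fusion ring $K_0(\mathrm{TLJ}_m)$, the class $\pi_\ell$ appears as a summand of $\pi_\ell \cdot \pi_{m-3}$; i.e., writing $\pi_\ell \cdot \pi_{m-3} = \sum_j c_j \pi_j$ in the basis $\{\pi_0,\ldots,\pi_{m-2}\}$, the coefficient $c_\ell \geq 1$. -/
import Mathlib


open Polynomial Finset

/-- Normalized Chebyshev polynomials of the second kind. -/
noncomputable def Delta : ℕ → Polynomial ℤ
  | 0 => 1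
  | 1 => Polynomial.X
  | (k+2) => Polynomial.X * Delta (k+1) - Delta k

lemma Delta_rec (n : ℕ) : Delta (n+2) = X * Delta (n+1) - Delta n := rfl

lemma X_mul_Delta (n : ℕ) : X * Delta (n+1) = Delta n + Delta (n+2) := by
  rw [Delta_rec]; ring

/-- In the quotient by `Delta (N+1)`, the top class acts by reflection. -/
lemma top_mul (N : ℕ) : ∀ b, b ≤ N →
    Ideal.Quotient.mk (Ideal.span {Delta (N+1)}) (Delta N) *
      Ideal.Quotient.mk (Ideal.span {Delta (N+1)}) (Delta b) =
    Ideal.Quotient.mk (Ideal.span {Delta (N+1)}) (Delta (N - b)) := by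
  have h0 : Ideal.Quotient.mk (Ideal.span {Delta (N+1)}) (Delta (N+1)) = 0 :=
    Ideal.Quotient.eq_zero_iff_mem.mpr (Ideal.subset_span rfl)
  intro b
  induction b using Nat.twoStepInduction with
  | zero =>
    intro _
    show _ * Ideal.Quotient.mk _ (1 : Polynomial ℤ) = _
    simp
  | one =>
    intro hle
    obtain ⟨n, rfl⟩ : ∃ n, N = n + 1 := ⟨N - 1, by omega⟩
    show _ * Ideal.Quotient.mk _ (X : Polynomial ℤ) = _
    rw [← map_mul, mul_comm, X_mul_Delta, map_add, h0, add_zero]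
    norm_num
  | more b ih ih1 =>
    intro h2
    obtain ⟨s, rfl⟩ : ∃ s, N = b + 2 + s := ⟨N - (b + 2), by omega⟩
    have e0 : b + 2 + s - b = s + 2 := by omega
    have e1 : b + 2 + s - (b + 1) = s + 1 := by omega
    have e2 : b + 2 + s - (b + 2) = s := by omega
    have hb := ih (by omega)
    have hb1 := ih1 (by omega)
    rw [e1] at hb1
    rw [e0] at hb
    rw [e2, Delta_rec b, map_sub, mul_sub, hb, map_mul,
      mul_comm (Ideal.Quotient.mk _ X), ← mul_assoc, hb1, ← map_mul,
      mul_comm (Delta (s+1)) X, X_mul_Delta s, map_add]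
    ring

/-- The key fusion computation: `π ℓ · π (N-1) = π (N-(ℓ-1)) + π (N-(ℓ+1))`. -/
lemma prod_eq (M N ℓ : ℕ) (hM : M = N + 1) (h1 : 1 ≤ ℓ) (hN : ℓ + 1 ≤ N) :
    Ideal.Quotient.mk (Ideal.span {Delta M}) (Delta ℓ) *
      Ideal.Quotient.mk (Ideal.span {Delta M}) (Delta (N-1)) =
    Ideal.Quotient.mk (Ideal.span {Delta M}) (Delta (N - (ℓ-1))) +
      Ideal.Quotient.mk (Ideal.span {Delta M}) (Delta (N - (ℓ+1))) := by
  subst hM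
  obtain ⟨t, rfl⟩ : ∃ t, ℓ = t + 1 := ⟨ℓ - 1, by omega⟩
  simp only [Nat.add_sub_cancel]
  have s1 := top_mul N 1 (by omega)
  have s2 := top_mul N t (by omega)
  have s3 := top_mul N (t+2) (by omega)
  have s4 : Ideal.Quotient.mk (Ideal.span {Delta (N+1)}) (Delta (t+1)) *
      Ideal.Quotient.mk (Ideal.span {Delta (N+1)}) (Delta 1) =
      Ideal.Quotient.mk (Ideal.span {Delta (N+1)}) (Delta t) +
        Ideal.Quotient.mk (Ideal.span {Delta (N+1)}) (Delta (t+2)) := by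
    show _ * Ideal.Quotient.mk _ (X : Polynomial ℤ) = _
    rw [← map_mul, mul_comm, X_mul_Delta, map_add]
  rw [← s1, show ∀ A B C : Polynomial ℤ ⧸ Ideal.span {Delta (N+1)},
      A * (B * C) = (A * C) * B from fun A B C => by ring, s4, add_mul,
    mul_comm (Ideal.Quotient.mk _ (Delta t)), s2,
    mul_comm (Ideal.Quotient.mk _ (Delta (t+2))), s3]

lemma sum_indicator {M : Type*} [AddCommMonoid M] (n a : ℕ) (ha : a < n) (x : ℕ → M) :
    ∑ j ∈ Finset.range n, (if j = a then 1 else 0) • x j = x a := by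
  have h : ∀ j, (if j = a then (1:ℕ) else 0) • x j = if j = a then x j else 0 := by
    intro j; split <;> simp
  rw [Finset.sum_congr rfl fun j _ => h j, Finset.sum_ite_eq',
    if_pos (Finset.mem_range.mpr ha)]

theorem pi_ell_summand_of_product_odd_case (k : ℕ) (hk : 2 ≤ k) :
    ∃ c : ℕ → ℕ,
      (Ideal.Quotient.mk (Ideal.span {Delta (2*k+1-1)})
          (Delta (if Even k then k else k - 1))) *
        (Ideal.Quotient.mk (Ideal.span {Delta (2*k+1-1)}) (Delta (2*k+1-3))) =
      Ideal.Quotient.mk (Ideal.span {Delta (2*k+1-1)})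
          (Delta (if Even k then k else k - 1)) +
        ∑ j ∈ Finset.range (2*k+1-1),
          c j • Ideal.Quotient.mk (Ideal.span {Delta (2*k+1-1)}) (Delta j) := by
  have h3 : 2*k+1-3 = (2*k-1)-1 := by omega
  by_cases hke : Even k
  · refine ⟨fun j => if j = k-2 then 1 else 0, ?_⟩
    simp only [if_pos hke, h3]
    rw [sum_indicator _ (k-2) (by omega) _]
    rw [prod_eq (2*k+1-1) (2*k-1) k (by omega) (by omega) (by omega)]
    have e1 : 2*k-1-(k-1) = k := by omega
    have e2 : 2*k-1-(k+1) = k-2 := by omega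
    rw [e1, e2]
  · refine ⟨fun j => if j = k+1 then 1 else 0, ?_⟩
    simp only [if_neg hke, h3]
    rw [sum_indicator _ (k+1) (by omega) _]
    rw [prod_eq (2*k+1-1) (2*k-1) (k-1) (by omega) (by omega) (by omega)]
    have e1 : 2*k-1-(k-1-1) = k+1 := by omega
    have e2 : 2*k-1-(k-1+1) = k-1 := by omega
    rw [e1, e2]
    exact add_comm _ _
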